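/- Let z : ℝ × ℝ → ℝ be twice continuously differentiable, satisfying the sine-Gordon equation z_{ys} = sin z for all (y, s), and suppose there is a fixed integer m with z(y + L, s) = z(y, s) + 2πm for all (y, s), where L > 0. Then the quantity H_2 = ∫_0^L z_y(y, s)² dy is independent of s. -/

import Mathlib

open MeasureTheory intervalIntegral Set

/-- **Conservation of `H₂ = ∫ z_y² dy` for the sine-Gordon equation.**
If `z` is `C²`, solves `z_{ys} = sin z`, and satisfies `z(y + L, s) = z(y, s) + 2πm`
for a fixed integer `m` and some `L > 0`, then `∫_0^L z_y(y, s)² dy` does not depend on `s`. -/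
theorem sineGordon_H2_conserved
    (z : ℝ → ℝ → ℝ) (L : ℝ) (hL : 0 < L) (m : ℤ)
    (hz : ContDiff ℝ 2 (Function.uncurry z))
    (heq : ∀ y s : ℝ, deriv (fun s' => deriv (fun y' => z y' s') y) s = Real.sin (z y s))
    (hper : ∀ y s : ℝ, z (y + L) s = z y s + 2 * Real.pi * (m : ℝ)) :
    ∀ s₁ s₂ : ℝ,
      (∫ y in (0:ℝ)..L, (deriv (fun y' => z y' s₁) y) ^ 2)
        = ∫ y in (0:ℝ)..L, (deriv (fun y' => z y' s₂) y) ^ 2 := by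
  intro s₁ s₂
  have hd : Differentiable ℝ (Function.uncurry z) := hz.differentiable (by norm_num)
  -- the y-derivative as value of the full fderiv
  have hu_eq : ∀ y s : ℝ, HasDerivAt (fun y' => z y' s)
      (fderiv ℝ (Function.uncurry z) (y, s) (1, 0)) y := by
    intro y s
    have h1 : HasFDerivAt (Function.uncurry z) (fderiv ℝ (Function.uncurry z) (y, s)) (y, s) :=
      (hd (y, s)).hasFDerivAt
    have h2 : HasDerivAt (fun y' : ℝ => (y', s)) ((1 : ℝ), (0 : ℝ)) y :=
      (hasDerivAt_id y).prodMk (hasDerivAt_const y s)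
    exact h1.comp_hasDerivAt y h2
  have hu_val : ∀ y s : ℝ, deriv (fun y' => z y' s) y
      = fderiv ℝ (Function.uncurry z) (y, s) (1, 0) := fun y s => (hu_eq y s).deriv
  have huD : ∀ y s : ℝ, HasDerivAt (fun y' => z y' s) (deriv (fun y' => z y' s) y) y := by
    intro y s; rw [hu_val]; exact hu_eq y s
  have hfC1 : ContDiff ℝ 1 (fderiv ℝ (Function.uncurry z)) :=
    hz.fderiv_right (m := 1) (by norm_num)
  -- joint continuity of z_y
  have hu_cont : Continuous fun p : ℝ × ℝ => deriv (fun y' => z y' p.2) p.1 := by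
    have h1 : Continuous fun p : ℝ × ℝ => fderiv ℝ (Function.uncurry z) p (1, 0) :=
      hfC1.continuous.clm_apply continuous_const
    have h2 : (fun p : ℝ × ℝ => deriv (fun y' => z y' p.2) p.1)
        = fun p : ℝ × ℝ => fderiv ℝ (Function.uncurry z) p (1, 0) := by
      funext p; rw [hu_val]
    rw [h2]; exact h1
  have hzc : Continuous fun p : ℝ × ℝ => z p.1 p.2 := hz.continuous
  -- s-derivative of z_y
  have hus : ∀ y s : ℝ, HasDerivAt (fun s' => deriv (fun y' => z y' s') y)
      (Real.sin (z y s)) s := by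
    intro y s
    have h2 : DifferentiableAt ℝ (fun s' : ℝ => fderiv ℝ (Function.uncurry z) (y, s') (1, 0)) s := by
      have h3 : DifferentiableAt ℝ (fun s' : ℝ => fderiv ℝ (Function.uncurry z) (y, s')) s :=
        ((hfC1.differentiable one_ne_zero).comp
          ((differentiable_const y).prodMk differentiable_id)) s
      exact h3.clm_apply (differentiableAt_const _)
    have h1 : DifferentiableAt ℝ (fun s' : ℝ => deriv (fun y' => z y' s') y) s :=
      h2.congr_of_eventuallyEq (Filter.Eventually.of_forall fun s' => hu_val y s')
    have h4 := h1.hasDerivAt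
    rwa [heq y s] at h4
  -- derivative of the squared quantity in s
  have hsq : ∀ y s : ℝ, HasDerivAt (fun s' => (deriv (fun y' => z y' s') y) ^ 2)
      (2 * Real.sin (z y s) * deriv (fun y' => z y' s) y) s := by
    intro y s
    have h : HasDerivAt (fun s' => (deriv (fun y' => z y' s') y) ^ 2) _ s := (hus y s).fun_pow 2
    convert h using 1
    ring
  -- continuity facts
  have hFcont : ∀ s : ℝ, Continuous fun y => (deriv (fun y' => z y' s) y) ^ 2 := fun s =>
    ((hu_cont.comp (continuous_id.prodMk continuous_const)).pow 2)
  have hF'cont : Continuous fun p : ℝ × ℝ =>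
      2 * Real.sin (z p.1 p.2) * deriv (fun y' => z y' p.2) p.1 :=
    (continuous_const.mul (Real.continuous_sin.comp hzc)).mul hu_cont
  -- the derivative of the energy in s is zero
  have key : ∀ s₀ : ℝ,
      HasDerivAt (fun s => ∫ y in (0:ℝ)..L, (deriv (fun y' => z y' s) y) ^ 2) 0 s₀ := by
    intro s₀
    obtain ⟨C, hC⟩ := (isCompact_Icc.prod isCompact_Icc :
        IsCompact ((Icc (0:ℝ) L) ×ˢ (Icc (s₀ - 1) (s₀ + 1)))).exists_bound_of_continuousOn
      hF'cont.continuousOn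
    have hmain := intervalIntegral.hasDerivAt_integral_of_dominated_loc_of_deriv_le
      (𝕜 := ℝ) (μ := volume) (a := 0) (b := L)
      (F := fun s y => (deriv (fun y' => z y' s) y) ^ 2)
      (F' := fun s y => 2 * Real.sin (z y s) * deriv (fun y' => z y' s) y)
      (x₀ := s₀) (s := Metric.ball s₀ 1) (bound := fun _ => C)
      (Metric.ball_mem_nhds s₀ one_pos)
      (Filter.Eventually.of_forall fun x => ((hFcont x).aestronglyMeasurable))
      ((hFcont s₀).intervalIntegrable 0 L)
      ((hF'cont.comp (continuous_id.prodMk continuous_const)).aestronglyMeasurable)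
      (Filter.Eventually.of_forall fun y hy => by
        intro x hx
        have hyI : y ∈ Icc (0:ℝ) L := by
          rw [Set.uIoc_of_le hL.le] at hy; exact Set.Ioc_subset_Icc_self hy
        have hxI : x ∈ Icc (s₀ - 1) (s₀ + 1) := by
          rw [Real.ball_eq_Ioo] at hx; exact Set.Ioo_subset_Icc_self hx
        exact hC (y, x) (Set.mk_mem_prod hyI hxI))
      (intervalIntegrable_const)
      (Filter.Eventually.of_forall fun y _ => fun x _ => hsq y x)
    have hzero : (∫ y in (0:ℝ)..L,
        2 * Real.sin (z y s₀) * deriv (fun y' => z y' s₀) y) = 0 := by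
      have hanti : ∀ y ∈ Set.uIcc (0:ℝ) L,
          HasDerivAt (fun y' => -2 * Real.cos (z y' s₀))
            (2 * Real.sin (z y s₀) * deriv (fun y' => z y' s₀) y) y := by
        intro y _
        have h1 : HasDerivAt (fun y' => -2 * Real.cos (z y' s₀)) _ y := ((huD y s₀).cos).const_mul (-2 : ℝ)
        convert h1 using 1
        ring
      have hint : IntervalIntegrable
          (fun y => 2 * Real.sin (z y s₀) * deriv (fun y' => z y' s₀) y) volume 0 L :=
        (hF'cont.comp (continuous_id.prodMk continuous_const)).intervalIntegrable 0 L
      rw [intervalIntegral.integral_eq_sub_of_hasDerivAt hanti hint]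
      have hLz : z L s₀ = z 0 s₀ + (m : ℝ) * (2 * Real.pi) := by
        have h := hper 0 s₀
        rw [zero_add] at h
        rw [h]; ring
      rw [hLz, Real.cos_add_int_mul_two_pi]
      ring
    rw [hzero] at hmain
    exact hmain.2
  exact is_const_of_deriv_eq_zero
    (fun s => (key s).differentiableAt) (fun s => (key s).deriv) s₁ s₂
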